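/- The image of T in R = ℂ[A,B,C,D,T]/I_T is not a zero divisor. -/

import Mathlib

open MvPolynomial

/-- Variables: `A = X 0`, `B = X 1`, `C = X 2`, `D = X 3`, `T = X 4`. -/
noncomputable def m₁ : MvPolynomial (Fin 5) ℂ :=
  ((X 0) ^ 2 + (X 4) ^ 5) * (X 0) ^ 2 - X 1 * X 2

noncomputable def m₂ : MvPolynomial (Fin 5) ℂ :=
  ((X 0) ^ 2 + (X 4) ^ 5) * ((X 1) ^ 2 - X 3) - X 2 * X 3

noncomputable def m₃ : MvPolynomial (Fin 5) ℂ :=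
  X 1 * ((X 1) ^ 2 - X 3) - (X 0) ^ 2 * X 3

/-- The ideal generated by the three 2×2 minors of
`[[A² + T⁵, B, D], [C, A², B² − D]]`. -/
noncomputable def I_T : Ideal (MvPolynomial (Fin 5) ℂ) :=
  Ideal.span {m₁, m₂, m₃}

/- ### Auxiliary lemmas -/

lemma prime_X_mv {n : ℕ} (i : Fin (n+1)) :
    Prime (X i : MvPolynomial (Fin (n+1)) ℂ) := by
  let e := ((renameEquiv ℂ (Equiv.swap i 0)).trans (finSuccEquiv ℂ n)).toRingEquiv.toMulEquiv
  rw [← MulEquiv.prime_iff e]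
  have : e (X i) = Polynomial.X := by simp [e, finSuccEquiv_X_zero]
  rw [this]
  exact Polynomial.prime_X

lemma not_X_dvd_X {n : ℕ} (i j : Fin n) (hij : i ≠ j)
    (h : (X i : MvPolynomial (Fin n) ℂ) ∣ X j) : False := by
  have := map_dvd (eval (fun k => if k = j then (1:ℂ) else 0)) h
  simp [hij] at this

lemma aux_unit (s : MvPolynomial (Fin 4) ℂ)
    (h1 : s ∣ X 0 + X 2 ^ 2) (h2 : s ∣ (X 0 : MvPolynomial (Fin 4) ℂ) ^ 3) :
    IsUnit s := by
  have hp0 : Prime (X 0 : MvPolynomial (Fin 4) ℂ) := prime_X_mv (n := 3) 0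
  rcases (dvd_prime_pow hp0 3).mp h2 with ⟨k, _, w, hw⟩
  rcases k with _ | k
  · exact IsUnit.of_mul_eq_one (a := s) w (by simpa using hw)
  · exfalso
    have hX0s : (X 0 : MvPolynomial (Fin 4) ℂ) ∣ s := by
      rcases hp0.2.2 s (↑w) (by rw [hw]; exact dvd_pow_self _ (Nat.succ_ne_zero k)) with h | h
      · exact h
      · exact absurd (isUnit_of_dvd_unit h w.isUnit) hp0.not_unit
    have h3 : (X 0 : MvPolynomial (Fin 4) ℂ) ∣ X 2 ^ 2 := by
      have := hX0s.trans h1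
      exact (dvd_add_right (dvd_refl _)).mp (by simpa using this)
    exact not_X_dvd_X 0 2 (by decide) (hp0.dvd_of_dvd_pow h3)

lemma q_ne : (X 0 + X 2 ^ 2 : MvPolynomial (Fin 4) ℂ) ≠ 0 := by
  intro h
  have := congrArg (eval (fun k => if k = 0 then (1:ℂ) else 0)) h
  simp at this

lemma prime_lin :
    Prime (Polynomial.C ((X 0: MvPolynomial (Fin 4) ℂ) ^ 3)
      - Polynomial.C (X 0 + X 2 ^ 2 : MvPolynomial (Fin 4) ℂ) * Polynomial.X) := by
  set q : MvPolynomial (Fin 4) ℂ := X 0 + X 2 ^ 2 with hq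
  set p : Polynomial (MvPolynomial (Fin 4) ℂ) :=
    Polynomial.C ((X 0 : MvPolynomial (Fin 4) ℂ) ^ 3) - Polynomial.C q * Polynomial.X with hp
  have hrw : p = Polynomial.C (-q) * Polynomial.X
      + Polynomial.C ((X 0 : MvPolynomial (Fin 4) ℂ) ^ 3) := by
    rw [hp, map_neg]; ring
  have hdeg : p.degree = 1 := by
    rw [hrw]; exact Polynomial.degree_linear (neg_ne_zero.mpr q_ne)
  have hpne : p ≠ 0 := fun h => by simp [h] at hdeg
  have hirr : Irreducible p := by
    constructor
    · intro h
      have := Polynomial.degree_eq_zero_of_isUnit h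
      rw [hdeg] at this; exact one_ne_zero this
    · intro f g hfg
      have hf0 : f ≠ 0 := fun h => hpne (by rw [hfg, h, zero_mul])
      have hg0 : g ≠ 0 := fun h => hpne (by rw [hfg, h, mul_zero])
      have hnd : f.natDegree + g.natDegree = 1 := by
        have := Polynomial.natDegree_mul hf0 hg0
        rw [← hfg] at this
        rw [← this]
        have : p.natDegree = 1 := Polynomial.natDegree_eq_of_degree_eq_some hdeg
        omega
      have key : ∀ h : Polynomial (MvPolynomial (Fin 4) ℂ),
          h ∣ p → h.natDegree = 0 → IsUnit h := by
        intro h hdvd hh0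
        have hC : h = Polynomial.C (h.coeff 0) := Polynomial.eq_C_of_natDegree_eq_zero hh0
        rcases hdvd with ⟨k, hk⟩
        have hc0 : p.coeff 0 = (X 0 : MvPolynomial (Fin 4) ℂ)^3 := by simp [hp, ← map_pow]
        have hc1 : p.coeff 1 = -q := by simp [hp, ← map_pow]
        have e0 : p.coeff 0 = h.coeff 0 * k.coeff 0 := by
          conv_lhs => rw [hk, hC]
          rw [Polynomial.coeff_C_mul]
        have e1 : p.coeff 1 = h.coeff 0 * k.coeff 1 := by
          conv_lhs => rw [hk, hC]
          rw [Polynomial.coeff_C_mul]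
        have hdvd0 : h.coeff 0 ∣ (X 0 : MvPolynomial (Fin 4) ℂ)^3 := ⟨k.coeff 0, by rw [← hc0, e0]⟩
        have hdvd1 : h.coeff 0 ∣ q := dvd_neg.mp ⟨k.coeff 1, by rw [← hc1, e1]⟩
        rw [hC, Polynomial.isUnit_C]
        exact aux_unit _ hdvd1 hdvd0
      rcases Nat.add_eq_one_iff.mp hnd with ⟨hf, _⟩ | ⟨_, hg⟩
      · exact Or.inl (key f (Dvd.intro _ hfg.symm) hf)
      · exact Or.inr (key g (Dvd.intro_left _ hfg.symm) hg)
  exact (UniqueFactorizationMonoid.irreducible_iff_prime).mp hirr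

lemma prime_nn3 :
    Prime (X 1 * ((X 1)^2 - X 3) - (X 0)^2 * X 3 : MvPolynomial (Fin 5) ℂ) := by
  let e := ((renameEquiv ℂ (Equiv.swap (3:Fin 5) 0)).trans (finSuccEquiv ℂ 4)).toRingEquiv
  have estep : ∀ i : Fin 5, e (X i) = finSuccEquiv ℂ 4 (X (Equiv.swap (3:Fin 5) 0 i)) := by
    intro i; simp [e]
  have e0 : e (X 0) = Polynomial.C (X 2) := by
    rw [estep, show (Equiv.swap (3:Fin 5) 0 0) = Fin.succ 2 by decide, finSuccEquiv_X_succ]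
  have e1 : e (X 1) = Polynomial.C (X 0) := by
    rw [estep, show (Equiv.swap (3:Fin 5) 0 1) = Fin.succ 0 by decide, finSuccEquiv_X_succ]
  have e3 : e (X 3) = Polynomial.X := by
    rw [estep, show (Equiv.swap (3:Fin 5) 0 3) = 0 by decide, finSuccEquiv_X_zero]
  have he : e (X 1 * ((X 1)^2 - X 3) - (X 0)^2 * X 3) =
      Polynomial.C ((X 0: MvPolynomial (Fin 4) ℂ) ^ 3)
      - Polynomial.C (X 0 + X 2 ^ 2 : MvPolynomial (Fin 4) ℂ) * Polynomial.X := by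
    simp only [map_sub, map_mul, map_pow, e0, e1, e3]
    rw [map_add, map_pow]
    ring
  rw [← MulEquiv.prime_iff e.toMulEquiv]
  show Prime (e (X 1 * ((X 1)^2 - X 3) - (X 0)^2 * X 3))
  rw [he]
  exact prime_lin

/-- The syzygy lemma: every syzygy of the reduced (T = 0) minors is a combination of
the two Hilbert–Burch row syzygies. -/
lemma syz {a b c : MvPolynomial (Fin 5) ℂ}
    (h : a * ((X 0)^4 - X 1 * X 2) + b * ((X 0)^2 * ((X 1)^2 - X 3) - X 2 * X 3)
      + c * (X 1 * ((X 1)^2 - X 3) - (X 0)^2 * X 3) = 0) :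
    ∃ u v : MvPolynomial (Fin 5) ℂ,
      a = u * X 3 + v * ((X 1)^2 - X 3) ∧
      b = -(u * X 1) - v * (X 0)^2 ∧
      c = u * (X 0)^2 + v * X 2 := by
  set nn1 : MvPolynomial (Fin 5) ℂ := (X 0)^4 - X 1 * X 2 with hnn1
  set nn3 : MvPolynomial (Fin 5) ℂ := X 1 * ((X 1)^2 - X 3) - (X 0)^2 * X 3 with hnn3
  have hp3 : Prime nn3 := prime_nn3
  have hX1 : Prime (X 1 : MvPolynomial (Fin 5) ℂ) := prime_X_mv 1
  have hnd : ¬ (nn3 ∣ nn1) := by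
    intro hd
    have := map_dvd (eval (fun k => if k = 0 then (1:ℂ) else 0)) hd
    simp [hnn1, hnn3] at this
  have hdvd : nn3 ∣ (a * X 1 + b * X 3) * nn1 :=
    ⟨-(b * (X 0)^2 + c * X 1), by linear_combination (X 1 : MvPolynomial (Fin 5) ℂ) * h⟩
  obtain ⟨v, hv⟩ : nn3 ∣ (a * X 1 + b * X 3) := (hp3.2.2 _ _ hdvd).resolve_right hnd
  have hQ : b * (X 0)^2 + c * X 1 = -(v * nn1) := by
    have h0 : nn3 * (v * nn1 + (b * (X 0)^2 + c * X 1)) = 0 := by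
      linear_combination (X 1 : MvPolynomial (Fin 5) ℂ) * h - nn1 * hv
    rcases mul_eq_zero.mp h0 with h1 | h1
    · exact absurd h1 hp3.ne_zero
    · linear_combination h1
  have h7 : (b + v * (X 0)^2) * X 3 = X 1 * (v * (X 1)^2 - v * X 3 - a) := by
    linear_combination hv
  have hbv : (X 1 : MvPolynomial (Fin 5) ℂ) ∣ (b + v * (X 0)^2) := by
    refine (hX1.2.2 _ _ ⟨_, h7⟩).resolve_right ?_
    exact fun hh => not_X_dvd_X 1 3 (by decide) hh
  obtain ⟨w, hw⟩ := hbv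
  have hX1ne : (X 1 : MvPolynomial (Fin 5) ℂ) ≠ 0 := hX1.ne_zero
  refine ⟨-w, v, ?_, by linear_combination hw, ?_⟩
  · have hcan : X 1 * (w * X 3) = X 1 * (v * (X 1)^2 - v * X 3 - a) := by
      linear_combination h7 - X 3 * hw
    have := mul_left_cancel₀ hX1ne hcan
    linear_combination this
  · have hcan : X 1 * c = X 1 * (-w * (X 0)^2 + v * X 2) := by
      linear_combination hQ - (X 0)^2 * hw
    have := mul_left_cancel₀ hX1ne hcan
    linear_combination this

/-- Substitution `T ↦ 0`. -/
noncomputable def σT : MvPolynomial (Fin 5) ℂ →ₐ[ℂ] MvPolynomial (Fin 5) ℂ :=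
  aeval (fun i => if i = (4 : Fin 5) then 0 else X i)

lemma X4_dvd_sub_σT (g : MvPolynomial (Fin 5) ℂ) : (X 4 : MvPolynomial (Fin 5) ℂ) ∣ g - σT g := by
  induction g using MvPolynomial.induction_on with
  | C a => simp [σT]
  | add p q hp hq =>
    rw [map_add]
    have : p + q - (σT p + σT q) = (p - σT p) + (q - σT q) := by ring
    rw [this]
    exact dvd_add hp hq
  | mul_X p n hp =>
    rw [map_mul]
    have hXn : σT (X n) = if n = 4 then 0 else X n := by simp [σT]
    by_cases hn : n = (4 : Fin 5)
    · subst hn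
      have h0 : σT (X (4 : Fin 5)) = 0 := by simp [σT]
      rw [h0, mul_zero, sub_zero]
      exact dvd_mul_left _ _
    · rw [hXn, if_neg hn]
      have : p * X n - σT p * X n = (p - σT p) * X n := by ring
      rw [this]
      exact hp.mul_right _

/-- The image of `T` in `R = ℂ[A,B,C,D,T]/I_T` is not a zero divisor. -/
theorem stmt_5 :
    Ideal.Quotient.mk I_T (X 4) ∈
      nonZeroDivisors (MvPolynomial (Fin 5) ℂ ⧸ I_T) := by
  rw [mem_nonZeroDivisors_iff_right]
  intro x hx
  obtain ⟨f, rfl⟩ := Ideal.Quotient.mk_surjective x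
  rw [← map_mul, Ideal.Quotient.eq_zero_iff_mem] at hx
  rw [Ideal.Quotient.eq_zero_iff_mem]
  -- extract the coefficients of the span membership
  rw [I_T] at hx
  rw [show ({m₁, m₂, m₃} : Set (MvPolynomial (Fin 5) ℂ)) = insert m₁ {m₂, m₃} from rfl] at hx
  rw [Ideal.mem_span_insert] at hx
  obtain ⟨a, z, hz, hfx⟩ := hx
  rw [show ({m₂, m₃} : Set (MvPolynomial (Fin 5) ℂ)) = insert m₂ {m₃} from rfl,
    Ideal.mem_span_insert] at hz
  obtain ⟨b, z', hz', hzz⟩ := hz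
  rw [Ideal.mem_span_singleton] at hz'
  obtain ⟨c, hc⟩ := hz'
  rw [hzz, hc] at hfx
  have hfT : f * X 4 = a * m₁ + b * m₂ + c * m₃ := by
    rw [hfx]; ring
  -- apply the T ↦ 0 substitution
  have hm1 : σT m₁ = (X 0)^4 - X 1 * X 2 := by
    simp [σT, m₁, aeval_X]
    ring
  have hm2 : σT m₂ = (X 0)^2 * ((X 1)^2 - X 3) - X 2 * X 3 := by
    simp [σT, m₂, aeval_X]
  have hm3 : σT m₃ = X 1 * ((X 1)^2 - X 3) - (X 0)^2 * X 3 := by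
    simp [σT, m₃, aeval_X]
  have hsyz : σT a * ((X 0)^4 - X 1 * X 2)
      + σT b * ((X 0)^2 * ((X 1)^2 - X 3) - X 2 * X 3)
      + σT c * (X 1 * ((X 1)^2 - X 3) - (X 0)^2 * X 3) = 0 := by
    have := congrArg σT hfT
    rw [map_mul, map_add, map_add, map_mul, map_mul, map_mul, hm1, hm2, hm3] at this
    have hX4 : σT (X 4) = 0 := by simp [σT]
    rw [hX4, mul_zero] at this
    linear_combination -this
  obtain ⟨u, v, hua, hub, huc⟩ := syz hsyz
  obtain ⟨a₁, ha₁⟩ := X4_dvd_sub_σT a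
  obtain ⟨b₁, hb₁⟩ := X4_dvd_sub_σT b
  obtain ⟨c₁, hc₁⟩ := X4_dvd_sub_σT c
  have hX4ne : (X 4 : MvPolynomial (Fin 5) ℂ) ≠ 0 := X_ne_zero 4
  have hf : f = a₁ * m₁ + b₁ * m₂ + (c₁ - u * (X 4)^4) * m₃ := by
    apply mul_left_cancel₀ hX4ne
    have hm₁ : m₁ = ((X 0) ^ 2 + (X 4) ^ 5) * (X 0) ^ 2 - X 1 * X 2 := rfl
    have hm₂ : m₂ = ((X 0) ^ 2 + (X 4) ^ 5) * ((X 1) ^ 2 - X 3) - X 2 * X 3 := rfl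
    have hm₃ : m₃ = X 1 * ((X 1) ^ 2 - X 3) - (X 0) ^ 2 * X 3 := rfl
    rw [hm₁, hm₂, hm₃] at hfT ⊢
    linear_combination hfT + (((X 0) ^ 2 + (X 4) ^ 5) * (X 0) ^ 2 - X 1 * X 2) * ha₁ + (((X 0) ^ 2 + (X 4) ^ 5) * ((X 1) ^ 2 - X 3) - X 2 * X 3) * hb₁ + (X 1 * ((X 1) ^ 2 - X 3) - (X 0) ^ 2 * X 3) * hc₁ + (((X 0) ^ 2 + (X 4) ^ 5) * (X 0) ^ 2 - X 1 * X 2) * hua + (((X 0) ^ 2 + (X 4) ^ 5) * ((X 1) ^ 2 - X 3) - X 2 * X 3) * hub + (X 1 * ((X 1) ^ 2 - X 3) - (X 0) ^ 2 * X 3) * huc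
  rw [hf]
  have hm1mem : m₁ ∈ I_T := Ideal.subset_span (Set.mem_insert _ _)
  have hm2mem : m₂ ∈ I_T := Ideal.subset_span (Set.mem_insert_of_mem _ (Set.mem_insert _ _))
  have hm3mem : m₃ ∈ I_T :=
    Ideal.subset_span (Set.mem_insert_of_mem _ (Set.mem_insert_of_mem _ rfl))
  exact Ideal.add_mem _ (Ideal.add_mem _ (Ideal.mul_mem_left _ _ hm1mem)
    (Ideal.mul_mem_left _ _ hm2mem)) (Ideal.mul_mem_left _ _ hm3mem)
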